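/- If the asynchronous graph of a Boolean network f : {0,1}^n → {0,1}^n is acyclic, then every n-path-universal word fixes f. -/

import Mathlib

/-- One asynchronous update step: replace coordinate `i` of `x` by `f x i`. -/
def updateStep {n : ℕ} (f : (Fin n → Bool) → (Fin n → Bool)) (x : Fin n → Bool)
    (i : Fin n) : Fin n → Bool :=
  Function.update x i (f x i)

/-- Action of a word on a state. -/
def applyWord {n : ℕ} (f : (Fin n → Bool) → (Fin n → Bool)) :
    List (Fin n) → (Fin n → Bool) → (Fin n → Bool)
  | [], x => x
  | i :: w, x => applyWord f w (updateStep f x i)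

/-- A word `w` fixes `f` if applying it to any state yields a fixed point of `f`. -/
def Fixes {n : ℕ} (f : (Fin n → Bool) → (Fin n → Bool)) (w : List (Fin n)) : Prop :=
  ∀ x, f (applyWord f w x) = applyWord f w x

/-- Arc of the asynchronous graph. -/
def AsyncArc {n : ℕ} (f : (Fin n → Bool) → (Fin n → Bool))
    (x y : Fin n → Bool) : Prop :=
  ∃ i : Fin n, f x i ≠ x i ∧ y = Function.update x i (f x i)

/-- `w` is induced by a path of the `n`-cube. -/
def IsPathWord (n : ℕ) (w : List (Fin n)) : Prop :=
  ∃ xs : List (Fin n → Bool), xs.Nodup ∧ xs.length = w.length + 1 ∧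
    ∀ k (hk : k < w.length),
      xs.getD (k + 1) default =
        Function.update (xs.getD k default) (w.get ⟨k, hk⟩)
          (!(xs.getD k default (w.get ⟨k, hk⟩)))

/-- `W` contains every `n`-path-word as a subword. -/
def PathUniversal (n : ℕ) (W : List (Fin n)) : Prop :=
  ∀ w : List (Fin n), IsPathWord n w → w.Sublist W

namespace PUFAux

variable {n : ℕ} (f : (Fin n → Bool) → (Fin n → Bool))

/-- The effective word: letters of `W` at which the state actually changes. -/
def effWord : List (Fin n) → (Fin n → Bool) → List (Fin n)
  | [], _ => []
  | i :: W, x =>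
    if f x i = x i then effWord W x else i :: effWord W (updateStep f x i)

/-- `u` is realizable from `x`: every letter is effective when applied. -/
def RealW : (Fin n → Bool) → List (Fin n) → Prop
  | _, [] => True
  | x, i :: u => f x i ≠ x i ∧ RealW (updateStep f x i) u

/-- The list of states visited while applying `u` from `x`. -/
def states : (Fin n → Bool) → List (Fin n) → List (Fin n → Bool)
  | x, [] => [x]
  | x, i :: u => x :: states (updateStep f x i) u

lemma dead_step {x : Fin n → Bool} {i : Fin n} (h : f x i = x i) :
    updateStep f x i = x := by
  unfold updateStep; rw [h]; exact Function.update_eq_self i x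

lemma effWord_head : ∀ (W : List (Fin n)) (x : Fin n → Bool) (j : Fin n)
    (t : List (Fin n)), effWord f W x = j :: t → f x j ≠ x j := by
  intro W
  induction W with
  | nil => intro x j t h; simp [effWord] at h
  | cons a W ih =>
    intro x j t h
    by_cases hd : f x a = x a
    · simp only [effWord, if_pos hd] at h
      exact ih x j t h
    · simp only [effWord, if_neg hd] at h
      obtain ⟨rfl, -⟩ := List.cons.inj h
      exact hd

lemma applyWord_effWord : ∀ (W : List (Fin n)) (x : Fin n → Bool),
    applyWord f (effWord f W x) x = applyWord f W x := by
  intro W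
  induction W with
  | nil => intro x; rfl
  | cons a W ih =>
    intro x
    by_cases hd : f x a = x a
    · simp only [effWord, if_pos hd, applyWord, dead_step f hd]
      exact ih x
    · simp only [effWord, if_neg hd, applyWord]
      exact ih (updateStep f x a)

lemma realW_effWord : ∀ (W : List (Fin n)) (x : Fin n → Bool),
    RealW f x (effWord f W x) := by
  intro W
  induction W with
  | nil => intro x; trivial
  | cons a W ih =>
    intro x
    by_cases hd : f x a = x a
    · simpa only [effWord, if_pos hd] using ih x
    · simp only [effWord, if_neg hd, RealW]
      exact ⟨hd, ih (updateStep f x a)⟩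

lemma realW_append : ∀ (u : List (Fin n)) (x : Fin n → Bool) (i : Fin n),
    RealW f x u → f (applyWord f u x) i ≠ applyWord f u x i →
    RealW f x (u ++ [i]) := by
  intro u
  induction u with
  | nil => intro x i _ h; exact ⟨h, trivial⟩
  | cons a u ih =>
    intro x i hr h
    exact ⟨hr.1, ih (updateStep f x a) i hr.2 h⟩

lemma states_length : ∀ (u : List (Fin n)) (x : Fin n → Bool),
    (states f x u).length = u.length + 1 := by
  intro u
  induction u with
  | nil => intro x; rfl
  | cons a u ih => intro x; simp [states, ih]

lemma states_head : ∀ (u : List (Fin n)) (x : Fin n → Bool),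
    (states f x u).getD 0 default = x := by
  intro u x; cases u <;> rfl

lemma states_chain : ∀ (u : List (Fin n)) (x : Fin n → Bool),
    RealW f x u → List.Chain' (AsyncArc f) (states f x u) := by
  intro u
  induction u with
  | nil => intro x _; simp [states, List.Chain']
  | cons a u ih =>
    intro x hr
    have htail := ih (updateStep f x a) hr.2
    rw [states, List.Chain', List.isChain_cons]
    refine ⟨?_, htail⟩
    intro y hy
    have hhead : (states f (updateStep f x a) u).head? = some (updateStep f x a) := by
      cases u <;> rfl
    rw [hhead, Option.mem_def, Option.some.injEq] at hy
    subst hy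
    exact ⟨a, hr.1, rfl⟩

lemma bool_flip {a b : Bool} (h : a ≠ b) : a = !b := by
  cases a <;> cases b <;> simp_all

lemma states_step : ∀ (u : List (Fin n)) (x : Fin n → Bool), RealW f x u →
    ∀ k (hk : k < u.length),
      (states f x u).getD (k + 1) default =
        Function.update ((states f x u).getD k default) (u.get ⟨k, hk⟩)
          (!((states f x u).getD k default (u.get ⟨k, hk⟩))) := by
  intro u
  induction u with
  | nil => intro x _ k hk; simp at hk
  | cons a u ih =>
    intro x hr k hk
    cases k with
    | zero =>
      simp only [states, List.getD_cons_succ, List.getD_cons_zero, List.get]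
      rw [states_head]
      have : f x a = !(x a) := bool_flip hr.1
      unfold updateStep
      rw [this]
    | succ k =>
      simp only [states, List.getD_cons_succ, List.get]
      have hk' : k < u.length := Nat.lt_of_succ_lt_succ hk
      exact ih (updateStep f x a) hr.2 k hk'

/-- Key combinatorial lemma: if `i` is effective at the end state of the run of
`W` from `x`, then `s ++ effWord f W x ++ [i]` is not a sublist of `W`. -/
lemma key : ∀ (W : List (Fin n)) (x : Fin n → Bool) (s : List (Fin n)) (i : Fin n),
    f (applyWord f W x) i ≠ applyWord f W x i →
    ¬ (s ++ (effWord f W x ++ [i])).Sublist W := by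
  intro W
  induction W with
  | nil =>
    intro x s i _ hsub
    have := List.eq_nil_of_sublist_nil hsub
    simp at this
  | cons j W ih =>
    intro x s i heff hsub
    by_cases hd : f x j = x j
    · -- dead letter
      rw [effWord, if_pos hd] at hsub
      have heff' : f (applyWord f W x) i ≠ applyWord f W x i := by
        simpa [applyWord, dead_step f hd] using heff
      rcases List.sublist_cons_iff.mp hsub with h | ⟨r, hr, h⟩
      · exact ih x s i heff' h
      · -- head of s ++ eff ++ [i] is j
        cases s with
        | cons b s =>
          simp only [List.cons_append] at hr
          obtain ⟨rfl, rfl⟩ := List.cons.inj hr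
          exact ih x s i heff' h
        | nil =>
          cases heq : effWord f W x with
          | cons c t =>
            rw [heq] at hr
            simp only [List.nil_append, List.cons_append] at hr
            obtain ⟨rfl, rfl⟩ := List.cons.inj hr
            exact effWord_head f W x c t heq hd
          | nil =>
            have hx : applyWord f W x = x := by
              rw [← applyWord_effWord f W x, heq]; rfl
            rw [heq] at hr
            simp only [List.nil_append] at hr
            obtain ⟨rfl, rfl⟩ := List.cons.inj hr
            rw [hx] at heff'
            exact heff' hd
    · -- live letter
      rw [effWord, if_neg hd] at hsub
      have heff' : f (applyWord f W (updateStep f x j)) i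
          ≠ applyWord f W (updateStep f x j) i := by
        simpa [applyWord] using heff
      rcases List.sublist_cons_iff.mp hsub with h | ⟨r, hr, h⟩
      · exact ih (updateStep f x j) (s ++ [j]) i heff' (by simpa using h)
      · cases s with
        | nil =>
          simp only [List.nil_append, List.cons_append] at hr
          obtain ⟨-, rfl⟩ := List.cons.inj hr
          exact ih (updateStep f x j) [] i heff' (by simpa using h)
        | cons b s =>
          simp only [List.cons_append] at hr
          obtain ⟨rfl, rfl⟩ := List.cons.inj hr
          exact ih (updateStep f x b) (s ++ [b]) i heff' (by simpa using h)

end PUFAux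

/-- if the asynchronous graph of `f` is acyclic, then every
`n`-path-universal word fixes `f`. -/
theorem pathUniversal_fixes_acyclic (n : ℕ) (f : (Fin n → Bool) → (Fin n → Bool))
    (hacyc : ∀ x, ¬ Relation.TransGen (AsyncArc f) x x)
    (W : List (Fin n)) (hW : PathUniversal n W) :
    Fixes f W := by
  intro x
  by_contra hne
  obtain ⟨i, hi⟩ := Function.ne_iff.mp hne
  set y := applyWord f W x with hy
  -- the extended effective word is realizable from x
  have hreal : PUFAux.RealW f x (PUFAux.effWord f W x ++ [i]) := by
    apply PUFAux.realW_append
    · exact PUFAux.realW_effWord f W x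
    · rw [PUFAux.applyWord_effWord f W x]; exact hi
  set u : List (Fin n) := PUFAux.effWord f W x ++ [i] with hu
  -- it is a path word
  have hpath : IsPathWord n u := by
    refine ⟨PUFAux.states f x u, ?_, PUFAux.states_length f u x,
      PUFAux.states_step f u x hreal⟩
    -- Nodup from acyclicity
    have hchain := PUFAux.states_chain f u x hreal
    have hchain' : List.Chain' (Relation.TransGen (AsyncArc f)) (PUFAux.states f x u) :=
      List.IsChain.imp (fun a b hab => Relation.TransGen.single hab) hchain
    have hpw : (PUFAux.states f x u).Pairwise (Relation.TransGen (AsyncArc f)) := by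
      haveI : IsTrans (Fin n → Bool) (Relation.TransGen (AsyncArc f)) :=
        ⟨fun _ _ _ => Relation.TransGen.trans⟩
      exact List.isChain_iff_pairwise.mp hchain'
    exact hpw.imp (fun {a b} hab => by
      rintro rfl
      exact hacyc a hab)
  have hsub := hW u hpath
  exact PUFAux.key f W x [] i hi (by simpa using hsub)
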